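/- Fix α₀ ∈ ℂ. Define Φ₀ : {(q₁,q₂,p₁,p₂) ∈ ℂ⁴ : p₁ ≠ 0} → ℂ⁴ by Φ₀(q₁,q₂,p₁,p₂) = (−((q₁−1)p₁−α₀)p₁, q₂, 1/p₁, p₂). Let Ω be the 4×4 complex matrix with entries Ω₁₃ = Ω₂₄ = 1, Ω₃₁ = Ω₄₂ = −1 and all other entries 0. Then Φ₀ is a symplectic transformation: at every point of its domain Φ₀ is complex-differentiable and the 4×4 matrix J of its derivative satisfies Jᵀ·Ω·J = Ω. -/

import Mathlib

/-- The coordinate system `Φ₀ = (x₂^{[01]}, y₂^{[01]}, z₂^{[01]}, w₂^{[01]})` resolving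
the accessible singularity `C₂^{(01)}` of the fourth-order FST Painlevé system,
`Φ₀(q₁,q₂,p₁,p₂) = (−((q₁−1)p₁−α₀)p₁, q₂, 1/p₁, p₂)`, is a symplectic
transformation: at every point of its domain `{p₁ ≠ 0}` it is complex-differentiable
and its Jacobian matrix `J` satisfies `Jᵀ Ω J = Ω`, where `Ω` is the matrix of the
canonical symplectic form (coordinates ordered `(q₁,q₂,p₁,p₂)`). -/
theorem Phi0_symplectic (α₀ : ℂ) (v : Fin 4 → ℂ) (hv : v 2 ≠ 0) :
    ∃ J : Matrix (Fin 4) (Fin 4) ℂ,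
      HasFDerivAt
        (fun w : Fin 4 → ℂ =>
          (![-((w 0 - 1) * w 2 - α₀) * w 2, w 1, 1 / w 2, w 3] :
            Fin 4 → ℂ))
        (LinearMap.toContinuousLinearMap (Matrix.mulVecLin J)) v ∧
      J.transpose * (!![0, 0, 1, 0; 0, 0, 0, 1; -1, 0, 0, 0; 0, -1, 0, 0] :
          Matrix (Fin 4) (Fin 4) ℂ) * J =
        !![0, 0, 1, 0; 0, 0, 0, 1; -1, 0, 0, 0; 0, -1, 0, 0] := by
  classical
  refine ⟨!![-(v 2)^2, 0, -(2*(v 0 - 1)*(v 2)) + α₀, 0;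
             0, 1, 0, 0;
             0, 0, -(1/(v 2)^2), 0;
             0, 0, 0, 1], ?_, ?_⟩
  · apply hasFDerivAt_pi''
    have p0 : HasFDerivAt (fun w : Fin 4 → ℂ => w 0)
        (ContinuousLinearMap.proj 0 : (Fin 4 → ℂ) →L[ℂ] ℂ) v := hasFDerivAt_apply 0 v
    have p1 : HasFDerivAt (fun w : Fin 4 → ℂ => w 1)
        (ContinuousLinearMap.proj 1 : (Fin 4 → ℂ) →L[ℂ] ℂ) v := hasFDerivAt_apply 1 v
    have p2 : HasFDerivAt (fun w : Fin 4 → ℂ => w 2)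
        (ContinuousLinearMap.proj 2 : (Fin 4 → ℂ) →L[ℂ] ℂ) v := hasFDerivAt_apply 2 v
    have p3 : HasFDerivAt (fun w : Fin 4 → ℂ => w 3)
        (ContinuousLinearMap.proj 3 : (Fin 4 → ℂ) →L[ℂ] ℂ) v := hasFDerivAt_apply 3 v
    intro i
    fin_cases i
    · have h : HasFDerivAt (fun w : Fin 4 → ℂ => -((w 0 - 1) * w 2 - α₀) * w 2)
          _ v := ((((p0.sub_const 1).mul p2).sub_const α₀).neg.mul p2)
      refine h.congr_fderiv ?_
      apply ContinuousLinearMap.ext; intro x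
      simp [Matrix.mulVecLin, Matrix.mulVec, dotProduct, Fin.sum_univ_four,
        Matrix.vecHead, Matrix.vecTail]
      ring
    · refine p1.congr_fderiv ?_
      apply ContinuousLinearMap.ext; intro x
      simp [Matrix.mulVecLin, Matrix.mulVec, dotProduct, Fin.sum_univ_four,
        Matrix.vecHead, Matrix.vecTail]
    · have h : HasFDerivAt (fun w : Fin 4 → ℂ => 1 / w 2)
          (-((v 2 ^ 2)⁻¹ • (ContinuousLinearMap.proj 2 : (Fin 4 → ℂ) →L[ℂ] ℂ))) v := by
        have h0 := (hasDerivAt_inv hv).comp_hasFDerivAt v p2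
        have h1 := h0.congr_fderiv
          (neg_smul (v 2 ^ 2)⁻¹ (ContinuousLinearMap.proj 2 : (Fin 4 → ℂ) →L[ℂ] ℂ))
        simp only [one_div]
        exact h1
      refine h.congr_fderiv ?_
      apply ContinuousLinearMap.ext; intro x
      simp [Matrix.mulVecLin, Matrix.mulVec, dotProduct, Fin.sum_univ_four,
        Matrix.vecHead, Matrix.vecTail]
      try field_simp
    · refine p3.congr_fderiv ?_
      apply ContinuousLinearMap.ext; intro x
      simp [Matrix.mulVecLin, Matrix.mulVec, dotProduct, Fin.sum_univ_four,
        Matrix.vecHead, Matrix.vecTail]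
  · ext i j
    fin_cases i <;> fin_cases j <;>
      · simp [Matrix.mul_apply, Matrix.transpose_apply, Fin.sum_univ_four,
          Matrix.vecHead, Matrix.vecTail, Function.comp]
        try field_simp
        try ring
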